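/- arXiv:2211.02450 — 2 statements merged into one kernel-verified Lean document; each statement's English description precedes it below -/
import Mathlib

section
/- (Key estimate for the N^{−1/2} discretization rate.) With ρ₀, particles x_i chosen so ∫_{x_{i−1}}^{x_i} ρ₀ = 1/N, lengths l_i = x_i − x_{i−1}, local variations v_i = TV_{(x_{i−1},x_i)}(ρ₀), and ρ̄^N the associated piecewise constant density, for each i one has ‖ρ̄^N − ρ₀‖_{L¹([x_{i−1},x_i])} ≤ min{l_i v_i, 2/N}, and summing, ‖ρ̄^N − ρ₀‖_{L¹(ℝ)} ≤ Σ_i √(2/N) √(l_i v_i) ≤ √(2/N) · (Σ_i l_i + Σ_i v_i)/2 ≤ (2S₀ + B₀)/√(2N). -/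
open MeasureTheory

/-- Piecewise constant density associated to sorted particles. -/
noncomputable def pcDensity (N : ℕ) (x : Fin (N + 1) → ℝ) : ℝ → ℝ :=
  fun y => ∑ i : Fin N, Set.indicator (Set.Ioo (x i.castSucc) (x i.succ))
    (fun _ => 1 / (N * (x i.succ - x i.castSucc))) y

/-- Key estimate for the `N^{-1/2}` discretization rate: with equal-mass particles,
on each interval `‖ρ̄^N − ρ₀‖_{L¹} ≤ min{l_i v_i, 2/N}`, and summing,
`‖ρ̄^N − ρ₀‖_{L¹(ℝ)} ≤ Σ_i √(2/N)√(l_i v_i) ≤ √(2/N)(Σl_i + Σv_i)/2 ≤ (2S₀+B₀)/√(2N)`. -/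
theorem stmt_13
    (ρ₀ : ℝ → ℝ) (hρ₀_meas : Measurable ρ₀) (hρ₀_nonneg : ∀ y, 0 ≤ ρ₀ y)
    (hρ₀_prob : ∫ y, ρ₀ y = 1)
    (R₀ S₀ B₀ : ℝ) (hR₀ : 0 < R₀) (hS₀ : 0 < S₀) (hB₀ : 0 < B₀)
    (hρ₀_bd : ∀ y, ρ₀ y ≤ R₀)
    (hρ₀_supp : Function.support ρ₀ ⊆ Set.Icc (-S₀) S₀)
    (hρ₀_tv : eVariationOn ρ₀ Set.univ ≤ ENNReal.ofReal B₀)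
    (N : ℕ) (hN : 0 < N)
    (x : Fin (N + 1) → ℝ) (hx : StrictMono x)
    (hx_range : ∀ i, x i ∈ Set.Icc (-S₀) S₀)
    (hx_mass : ∀ i : Fin N, ∫ y in x i.castSucc..x i.succ, ρ₀ y = 1 / N)
    (l v : Fin N → ℝ)
    (hl : l = fun i => x i.succ - x i.castSucc)
    (hv : v = fun i => (eVariationOn ρ₀ (Set.Ioo (x i.castSucc) (x i.succ))).toReal) :
    (∀ i : Fin N, ∫ y in Set.Icc (x i.castSucc) (x i.succ),
        |pcDensity N x y - ρ₀ y| ≤ min (l i * v i) (2 / N)) ∧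
    (∫ y, |pcDensity N x y - ρ₀ y|
        ≤ ∑ i : Fin N, Real.sqrt (2 / N) * Real.sqrt (l i * v i)) ∧
    (∑ i : Fin N, Real.sqrt (2 / N) * Real.sqrt (l i * v i)
        ≤ Real.sqrt (2 / N) * ((∑ i : Fin N, l i) + ∑ i : Fin N, v i) / 2) ∧
    (∫ y, |pcDensity N x y - ρ₀ y| ≤ (2 * S₀ + B₀) / Real.sqrt (2 * N)) := by
  have hNR : (0:ℝ) < N := Nat.cast_pos.mpr hN
  have hab : ∀ i : Fin N, x i.castSucc < x i.succ := fun i => hx Fin.castSucc_lt_succ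
  have hlpos : ∀ i : Fin N, 0 < x i.succ - x i.castSucc := fun i => sub_pos.mpr (hab i)
  have hl0 : ∀ i : Fin N, 0 < l i := fun i => by rw [hl]; exact hlpos i
  have hv0 : ∀ i : Fin N, 0 ≤ v i := fun i => by rw [hv]; exact ENNReal.toReal_nonneg
  -- disjointness
  have hdkey : ∀ i j : Fin N, i < j →
      Disjoint (Set.Ioo (x i.castSucc) (x i.succ)) (Set.Ioo (x j.castSucc) (x j.succ)) := by
    intro i j hij
    apply Set.disjoint_left.mpr
    intro y hyi hyj
    have hij' : (i : ℕ) < (j : ℕ) := hij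
    have h1 : x i.succ ≤ x j.castSucc := hx.monotone (by
      rw [Fin.le_def]; simp only [Fin.val_succ, Fin.coe_castSucc]; omega)
    exact absurd (lt_of_lt_of_le hyi.2 h1) (not_lt.mpr hyj.1.le)
  have hdisj : Pairwise (Function.onFun Disjoint
      fun i : Fin N => Set.Ioo (x i.castSucc) (x i.succ)) := by
    intro i j hij
    rcases lt_or_gt_of_ne hij with h | h
    · exact hdkey i j h
    · exact (hdkey j i h).symm
  -- pointwise values of pcDensity
  have hpc_on : ∀ (i : Fin N) (y : ℝ), y ∈ Set.Ioo (x i.castSucc) (x i.succ) →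
      pcDensity N x y = 1 / (N * (x i.succ - x i.castSucc)) := by
    intro i y hy
    unfold pcDensity
    rw [Finset.sum_eq_single i]
    · exact Set.indicator_of_mem hy _
    · intro j _ hji
      exact Set.indicator_of_notMem
        (fun hyj => Set.disjoint_left.mp (hdisj hji) hyj hy) _
    · intro h; exact absurd (Finset.mem_univ i) h
  have hpc_zero : ∀ y : ℝ, (∀ i : Fin N, y ∉ Set.Ioo (x i.castSucc) (x i.succ)) →
      pcDensity N x y = 0 := by
    intro y hy
    exact Finset.sum_eq_zero fun i _ => Set.indicator_of_notMem (hy i) _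
  -- integrability
  have hρ₀_int : Integrable ρ₀ := by
    have hind : Integrable (Set.indicator (Set.Icc (-S₀) S₀) fun _ => R₀) := by
      rw [integrable_indicator_iff measurableSet_Icc]
      exact (integrableOn_const_iff).mpr (Or.inr measure_Icc_lt_top)
    refine hind.mono' hρ₀_meas.aestronglyMeasurable (ae_of_all _ fun y => ?_)
    by_cases hy : ρ₀ y = 0
    · rw [hy]; simp only [norm_zero]
      exact Set.indicator_nonneg (fun _ _ => hR₀.le) y
    · have hmem : y ∈ Set.Icc (-S₀) S₀ := hρ₀_supp hy
      rw [Set.indicator_of_mem hmem, Real.norm_eq_abs, abs_of_nonneg (hρ₀_nonneg y)]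
      exact hρ₀_bd y
  have hpc_int : Integrable (pcDensity N x) := by
    unfold pcDensity
    apply integrable_finset_sum
    intro i _
    rw [integrable_indicator_iff measurableSet_Ioo]
    exact (integrableOn_const_iff).mpr (Or.inr measure_Ioo_lt_top)
  have hf_int : Integrable (fun y => |pcDensity N x y - ρ₀ y|) := (hpc_int.sub hρ₀_int).abs
  -- mass on each Ioo
  have hmass : ∀ i : Fin N, ∫ y in Set.Ioo (x i.castSucc) (x i.succ), ρ₀ y = 1 / N := by
    intro i
    have h := hx_mass i
    rw [intervalIntegral.integral_of_le (hab i).le, integral_Ioc_eq_integral_Ioo] at h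
    exact h
  -- finiteness of local variation
  have hEfin : ∀ i : Fin N,
      eVariationOn ρ₀ (Set.Ioo (x i.castSucc) (x i.succ)) ≠ ⊤ := by
    intro i
    exact (lt_of_le_of_lt
      (le_trans (eVariationOn.mono ρ₀ (Set.subset_univ _)) hρ₀_tv)
      ENNReal.ofReal_lt_top).ne
  -- oscillation bound
  have hosc : ∀ (i : Fin N), ∀ y ∈ Set.Ioo (x i.castSucc) (x i.succ),
      ∀ z ∈ Set.Ioo (x i.castSucc) (x i.succ), |ρ₀ z - ρ₀ y| ≤ v i := by
    intro i y hy z hz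
    have h1 := eVariationOn.edist_le ρ₀ hz hy
    have h2 : edist (ρ₀ z) (ρ₀ y) = ENNReal.ofReal |ρ₀ z - ρ₀ y| := by
      rw [edist_dist, Real.dist_eq]
    rw [h2] at h1
    rw [hv]
    calc |ρ₀ z - ρ₀ y| = (ENNReal.ofReal |ρ₀ z - ρ₀ y|).toReal :=
          (ENNReal.toReal_ofReal (abs_nonneg _)).symm
      _ ≤ _ := ENNReal.toReal_mono (hEfin i) h1
  -- key per-interval bound on Ioo
  have key : ∀ i : Fin N, ∫ y in Set.Ioo (x i.castSucc) (x i.succ),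
      |pcDensity N x y - ρ₀ y| ≤ min (l i * v i) (2 / N) := by
    intro i
    set a := x i.castSucc with ha
    set b := x i.succ with hb
    have hab' : a < b := hab i
    have hL : 0 < b - a := hlpos i
    set c : ℝ := 1 / (N * (b - a)) with hc
    have hc0 : 0 < c := by positivity
    have hA : MeasurableSet (Set.Ioo a b) := measurableSet_Ioo
    have hμA : (volume (Set.Ioo a b)).toReal = b - a := by
      rw [Real.volume_Ioo, ENNReal.toReal_ofReal hL.le]
    have hcongr : ∫ y in Set.Ioo a b, |pcDensity N x y - ρ₀ y|
        = ∫ y in Set.Ioo a b, |c - ρ₀ y| :=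
      setIntegral_congr_fun hA (fun y hy => by rw [hpc_on i y hy])
    rw [hcongr]
    have hint1 : IntegrableOn (fun y => |c - ρ₀ y|) (Set.Ioo a b) :=
      (((integrableOn_const_iff).mpr (Or.inr measure_Ioo_lt_top)).sub hρ₀_int.integrableOn).abs
    refine le_min ?_ ?_
    · -- bound by l i * v i
      have hpt : ∀ y ∈ Set.Ioo a b, |c - ρ₀ y| ≤ v i := by
        intro y hy
        have e1 : ∫ z in Set.Ioo a b, (ρ₀ z - ρ₀ y) = 1 / N - (b - a) * ρ₀ y := by
          rw [integral_sub hρ₀_int.integrableOn ((integrableOn_const_iff).mpr (Or.inr measure_Ioo_lt_top))]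
          rw [hmass i, setIntegral_const, measureReal_def, hμA, smul_eq_mul]
        have e2 : |∫ z in Set.Ioo a b, (ρ₀ z - ρ₀ y)|
            ≤ ∫ z in Set.Ioo a b, |ρ₀ z - ρ₀ y| := by
          calc |∫ z in Set.Ioo a b, (ρ₀ z - ρ₀ y)|
              = ‖∫ z in Set.Ioo a b, (ρ₀ z - ρ₀ y)‖ := (Real.norm_eq_abs _).symm
            _ ≤ ∫ z in Set.Ioo a b, ‖ρ₀ z - ρ₀ y‖ := norm_integral_le_integral_norm _
            _ = ∫ z in Set.Ioo a b, |ρ₀ z - ρ₀ y| := by simp [Real.norm_eq_abs]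
        have e3 : ∫ z in Set.Ioo a b, |ρ₀ z - ρ₀ y| ≤ ∫ _z in Set.Ioo a b, v i := by
          refine setIntegral_mono_on ((hρ₀_int.integrableOn.sub
              ((integrableOn_const_iff).mpr (Or.inr measure_Ioo_lt_top))).abs)
            ((integrableOn_const_iff).mpr (Or.inr measure_Ioo_lt_top)) hA ?_
          intro z hz
          exact hosc i y hy z hz
        have e4 : ∫ _z in Set.Ioo a b, v i = (b - a) * v i := by
          rw [setIntegral_const, measureReal_def, hμA, smul_eq_mul]
        have e5 : |1 / (N:ℝ) - (b - a) * ρ₀ y| ≤ (b - a) * v i := by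
          rw [← e1, ← e4]; exact le_trans e2 e3
        have e6 : c - ρ₀ y = (1 / N - (b - a) * ρ₀ y) / (b - a) := by
          rw [hc]; field_simp
        rw [e6, abs_div, abs_of_pos hL, div_le_iff₀ hL]
        calc |1 / (N:ℝ) - (b - a) * ρ₀ y| ≤ (b - a) * v i := e5
          _ = v i * (b - a) := by ring
      calc ∫ y in Set.Ioo a b, |c - ρ₀ y| ≤ ∫ _y in Set.Ioo a b, v i :=
            setIntegral_mono_on hint1 ((integrableOn_const_iff).mpr (Or.inr measure_Ioo_lt_top)) hA hpt
        _ = (b - a) * v i := by rw [setIntegral_const, measureReal_def, hμA, smul_eq_mul]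
        _ = l i * v i := by rw [hl]
    · -- bound by 2/N
      have hpt : ∀ y ∈ Set.Ioo a b, |c - ρ₀ y| ≤ c + ρ₀ y := by
        intro y _
        have := hρ₀_nonneg y
        exact abs_le.mpr ⟨by linarith, by linarith⟩
      calc ∫ y in Set.Ioo a b, |c - ρ₀ y| ≤ ∫ y in Set.Ioo a b, (c + ρ₀ y) :=
            setIntegral_mono_on hint1
              (((integrableOn_const_iff).mpr (Or.inr measure_Ioo_lt_top)).add hρ₀_int.integrableOn)
              hA hpt
        _ = (b - a) * c + 1 / N := by
            have hci : Integrable (fun _ : ℝ => c) (volume.restrict (Set.Ioo a b)) :=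
              integrableOn_const measure_Ioo_lt_top.ne
            rw [integral_add hci
              hρ₀_int.integrableOn, setIntegral_const, measureReal_def, hμA, smul_eq_mul, hmass i]
        _ = 2 / N := by rw [hc]; field_simp; ring
  -- part 1
  have part1 : ∀ i : Fin N, ∫ y in Set.Icc (x i.castSucc) (x i.succ),
      |pcDensity N x y - ρ₀ y| ≤ min (l i * v i) (2 / N) := by
    intro i
    rw [integral_Icc_eq_integral_Ioo]
    exact key i
  -- global decomposition
  set U := ⋃ i : Fin N, Set.Ioo (x i.castSucc) (x i.succ) with hUdef
  have hUm : MeasurableSet U := MeasurableSet.iUnion fun i => measurableSet_Ioo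
  have hUsum : ∫ y in U, |pcDensity N x y - ρ₀ y|
      = ∑ i : Fin N, ∫ y in Set.Ioo (x i.castSucc) (x i.succ), |pcDensity N x y - ρ₀ y| := by
    rw [hUdef, integral_iUnion (fun i => measurableSet_Ioo) hdisj hf_int.integrableOn,
      tsum_fintype]
  have hUρ : ∫ y in U, ρ₀ y = 1 := by
    rw [hUdef, integral_iUnion (fun i => measurableSet_Ioo) hdisj hρ₀_int.integrableOn,
      tsum_fintype]
    simp only [hmass]
    rw [Finset.sum_const, Finset.card_univ, Fintype.card_fin, nsmul_eq_mul]
    field_simp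
  have hcompl0 : ∫ y in Uᶜ, ρ₀ y = 0 := by
    have h := integral_add_compl hUm hρ₀_int
    rw [hUρ, hρ₀_prob] at h
    linarith
  have hcompl : ∫ y in Uᶜ, |pcDensity N x y - ρ₀ y| = 0 := by
    have hcg : ∫ y in Uᶜ, |pcDensity N x y - ρ₀ y| = ∫ y in Uᶜ, ρ₀ y := by
      refine setIntegral_congr_fun hUm.compl (fun y hy => ?_)
      have hy' : ∀ i : Fin N, y ∉ Set.Ioo (x i.castSucc) (x i.succ) := by
        intro i hyi
        exact hy (Set.mem_iUnion.mpr ⟨i, hyi⟩)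
      rw [hpc_zero y hy', zero_sub, abs_neg, abs_of_nonneg (hρ₀_nonneg y)]
    rw [hcg, hcompl0]
  have hsplit : ∫ y, |pcDensity N x y - ρ₀ y|
      = ∑ i : Fin N, ∫ y in Set.Ioo (x i.castSucc) (x i.succ), |pcDensity N x y - ρ₀ y| := by
    rw [← integral_add_compl hUm hf_int, hcompl, hUsum, add_zero]
  -- min ≤ sqrt * sqrt
  have h2N : (0:ℝ) ≤ 2 / N := by positivity
  have hminle : ∀ i : Fin N, min (l i * v i) (2 / N)
      ≤ Real.sqrt (2 / N) * Real.sqrt (l i * v i) := by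
    intro i
    have h1 : 0 ≤ l i * v i := mul_nonneg (hl0 i).le (hv0 i)
    rw [← Real.sqrt_mul h2N]
    have hmin : 0 ≤ min (l i * v i) (2 / N) := le_min h1 h2N
    calc min (l i * v i) (2 / N)
        = Real.sqrt (min (l i * v i) (2 / N) * min (l i * v i) (2 / N)) :=
          (Real.sqrt_mul_self hmin).symm
      _ ≤ Real.sqrt (2 / N * (l i * v i)) :=
          Real.sqrt_le_sqrt (mul_le_mul (min_le_right _ _) (min_le_left _ _) hmin h2N)
  -- part 2
  have part2 : ∫ y, |pcDensity N x y - ρ₀ y|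
      ≤ ∑ i : Fin N, Real.sqrt (2 / N) * Real.sqrt (l i * v i) := by
    rw [hsplit]
    exact Finset.sum_le_sum fun i _ => le_trans (key i) (hminle i)
  -- part 3
  have part3 : ∑ i : Fin N, Real.sqrt (2 / N) * Real.sqrt (l i * v i)
      ≤ Real.sqrt (2 / N) * ((∑ i : Fin N, l i) + ∑ i : Fin N, v i) / 2 := by
    have hterm : ∀ i ∈ Finset.univ, Real.sqrt (2 / N) * Real.sqrt (l i * v i)
        ≤ Real.sqrt (2 / N) * ((l i + v i) / 2) := by
      intro i _
      apply mul_le_mul_of_nonneg_left _ (Real.sqrt_nonneg _)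
      rw [Real.sqrt_mul (hl0 i).le]
      have hsl := Real.sq_sqrt (hl0 i).le
      have hsv := Real.sq_sqrt (hv0 i)
      nlinarith [sq_nonneg (Real.sqrt (l i) - Real.sqrt (v i)),
        Real.sqrt_nonneg (l i), Real.sqrt_nonneg (v i)]
    calc ∑ i : Fin N, Real.sqrt (2 / N) * Real.sqrt (l i * v i)
        ≤ ∑ i : Fin N, Real.sqrt (2 / N) * ((l i + v i) / 2) := Finset.sum_le_sum hterm
      _ = Real.sqrt (2 / N) * ((∑ i : Fin N, l i) + ∑ i : Fin N, v i) / 2 := by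
          rw [← Finset.mul_sum]
          rw [← Finset.sum_div, Finset.sum_add_distrib]
          ring
  -- telescoping sum of lengths
  set g : ℕ → ℝ := fun k => x ⟨min k N, by omega⟩ with hg
  have hsuml : ∑ i : Fin N, l i = x (Fin.last N) - x 0 := by
    have hstep : ∀ i : Fin N, l i = g (↑i + 1) - g ↑i := by
      intro i
      have hi := i.isLt
      have h1 : (⟨min ((i:ℕ) + 1) N, by omega⟩ : Fin (N+1)) = i.succ := by
        apply Fin.ext; simp only [Fin.val_succ]; omega
      have h2 : (⟨min (i:ℕ) N, by omega⟩ : Fin (N+1)) = i.castSucc := by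
        apply Fin.ext; simp only [Fin.coe_castSucc]; omega
      rw [hl, hg]
      simp only
      rw [h1, h2]
    calc ∑ i : Fin N, l i = ∑ i : Fin N, (g (↑i + 1) - g ↑i) :=
          Finset.sum_congr rfl fun i _ => hstep i
      _ = ∑ k ∈ Finset.range N, (g (k + 1) - g k) :=
          Fin.sum_univ_eq_sum_range (fun k => g (k + 1) - g k) N
      _ = g N - g 0 := Finset.sum_range_sub g N
      _ = x (Fin.last N) - x 0 := by
          rw [hg]; simp only
          congr 1 <;> apply congrArg <;> apply Fin.ext <;> simp [Fin.last]
  have hsuml_le : ∑ i : Fin N, l i ≤ 2 * S₀ := by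
    rw [hsuml]
    have h1 := (hx_range (Fin.last N)).2
    have h2 := (hx_range 0).1
    linarith
  -- sum of variations ≤ B₀
  have hg_mono : ∀ m n : ℕ, m ≤ n → g m ≤ g n := by
    intro m n h
    apply hx.monotone
    rw [Fin.le_def]
    simp only
    omega
  have hEsum : ∀ n : ℕ, n ≤ N →
      ∑ k ∈ Finset.range n, eVariationOn ρ₀ (Set.Ioo (g k) (g (k + 1)))
        ≤ eVariationOn ρ₀ (Set.Ioo (g 0) (g n)) := by
    intro n
    induction n with
    | zero => intro _; simp
    | succ n ih =>
      intro hn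
      rw [Finset.sum_range_succ]
      have ih' := ih (by omega)
      have hstep : eVariationOn ρ₀ (Set.Ioo (g 0) (g n))
            + eVariationOn ρ₀ (Set.Ioo (g n) (g (n + 1)))
          ≤ eVariationOn ρ₀ (Set.Ioo (g 0) (g n) ∪ Set.Ioo (g n) (g (n + 1))) :=
        eVariationOn.add_le_union ρ₀ (fun p hp q hq => le_trans hp.2.le hq.1.le)
      have hsub : Set.Ioo (g 0) (g n) ∪ Set.Ioo (g n) (g (n + 1))
          ⊆ Set.Ioo (g 0) (g (n + 1)) := by
        rintro p (hp | hp)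
        · exact ⟨hp.1, lt_of_lt_of_le hp.2 (hg_mono n (n + 1) (by omega))⟩
        · exact ⟨lt_of_le_of_lt (hg_mono 0 n (by omega)) hp.1, hp.2⟩
      exact le_trans (add_le_add ih' le_rfl)
        (le_trans hstep (eVariationOn.mono ρ₀ hsub))
  have hEsum' : ∑ i : Fin N, eVariationOn ρ₀ (Set.Ioo (x i.castSucc) (x i.succ))
      ≤ ENNReal.ofReal B₀ := by
    have heq : ∑ i : Fin N, eVariationOn ρ₀ (Set.Ioo (x i.castSucc) (x i.succ))
        = ∑ k ∈ Finset.range N, eVariationOn ρ₀ (Set.Ioo (g k) (g (k + 1))) := by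
      rw [← Fin.sum_univ_eq_sum_range (fun k => eVariationOn ρ₀ (Set.Ioo (g k) (g (k + 1)))) N]
      refine Finset.sum_congr rfl fun i _ => ?_
      have hi := i.isLt
      have h1 : g ↑i = x i.castSucc := by
        rw [hg]; apply congrArg; apply Fin.ext; simp only [Fin.coe_castSucc]; omega
      have h2 : g (↑i + 1) = x i.succ := by
        rw [hg]; apply congrArg; apply Fin.ext; simp only [Fin.val_succ]; omega
      rw [h1, h2]
    rw [heq]
    exact le_trans (hEsum N le_rfl)
      (le_trans (eVariationOn.mono ρ₀ (Set.subset_univ _)) hρ₀_tv)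
  have hsumv : ∑ i : Fin N, v i ≤ B₀ := by
    rw [hv]
    calc ∑ i : Fin N, (eVariationOn ρ₀ (Set.Ioo (x i.castSucc) (x i.succ))).toReal
        = (∑ i : Fin N, eVariationOn ρ₀ (Set.Ioo (x i.castSucc) (x i.succ))).toReal :=
          (ENNReal.toReal_sum fun i _ => hEfin i).symm
      _ ≤ (ENNReal.ofReal B₀).toReal := ENNReal.toReal_mono ENNReal.ofReal_ne_top hEsum'
      _ = B₀ := ENNReal.toReal_ofReal hB₀.le
  -- final arithmetic
  have hsq2N : (0:ℝ) < Real.sqrt (2 * N) := Real.sqrt_pos.mpr (by positivity)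
  have hsq : Real.sqrt (2 / N) = 2 / Real.sqrt (2 * N) := by
    rw [eq_div_iff hsq2N.ne', ← Real.sqrt_mul h2N]
    rw [show (2 / (N:ℝ)) * (2 * N) = 4 by field_simp; ring]
    rw [show (4:ℝ) = 2 ^ 2 by norm_num, Real.sqrt_sq (by norm_num : (0:ℝ) ≤ 2)]
  refine ⟨part1, part2, part3, ?_⟩
  calc ∫ y, |pcDensity N x y - ρ₀ y|
      ≤ ∑ i : Fin N, Real.sqrt (2 / N) * Real.sqrt (l i * v i) := part2
    _ ≤ Real.sqrt (2 / N) * ((∑ i : Fin N, l i) + ∑ i : Fin N, v i) / 2 := part3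
    _ ≤ Real.sqrt (2 / N) * (2 * S₀ + B₀) / 2 := by
        have h := add_le_add hsuml_le hsumv
        have h2 := mul_le_mul_of_nonneg_left h (Real.sqrt_nonneg (2 / (N:ℝ)))
        linarith
    _ = (2 * S₀ + B₀) / Real.sqrt (2 * N) := by
        rw [hsq]; field_simp
end

section
/- (Sharpness building block.) For N, C_N ∈ ℕ₊ let β_N(x) = Σ_{k=0}^{C_N} N^{−1/2} 1_{[2k/√N, (2k+1)/√N]}(x). Then for every family of sorted particles X^N = (x₀,…,x_N) with associated piecewise constant density ρ̄^N (with ∫ρ̄^N between consecutive particles equal to 1/N), one has ‖ρ̄^N − β_N‖_{L¹([0,(2C_N+1)/√N])} ≥ C_N/(4N). -/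
open MeasureTheory

/-- The comb of `C+1` bumps. -/
noncomputable def betaFun (N C : ℕ) : ℝ → ℝ := fun y =>
  ∑ k ∈ Finset.range (C + 1),
    Set.indicator (Set.Icc (2 * (k : ℝ) / Real.sqrt N) ((2 * (k : ℝ) + 1) / Real.sqrt N))
      (fun _ => (Real.sqrt N)⁻¹) y

lemma pc_nonneg (N : ℕ) (x : Fin (N + 1) → ℝ) (y : ℝ) : 0 ≤ pcDensity N x y := by
  apply Finset.sum_nonneg
  intro i _
  apply Set.indicator_nonneg
  intro z hz
  have h : x i.castSucc < x i.succ := hz.1.trans hz.2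
  have hd : (0:ℝ) ≤ x i.succ - x i.castSucc := sub_nonneg.2 h.le
  exact div_nonneg zero_le_one (mul_nonneg (Nat.cast_nonneg N) hd)

lemma pc_eval (N : ℕ) (x : Fin (N + 1) → ℝ) (hx : Monotone x) (i : Fin N) {z : ℝ}
    (hz : z ∈ Set.Ioo (x i.castSucc) (x i.succ)) :
    pcDensity N x z = 1 / (N * (x i.succ - x i.castSucc)) := by
  unfold pcDensity
  rw [Finset.sum_eq_single i]
  · exact Set.indicator_of_mem hz _
  · intro j _ hji
    apply Set.indicator_of_notMem
    rcases lt_or_gt_of_ne hji with h | h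
    · have hle : x j.succ ≤ x i.castSucc := by
        apply hx
        simp only [Fin.le_def, Fin.val_succ, Fin.coe_castSucc]
        exact h
      intro hmem
      exact absurd hmem.2 (not_lt.2 (hle.trans hz.1.le))
    · have hle : x i.succ ≤ x j.castSucc := by
        apply hx
        simp only [Fin.le_def, Fin.val_succ, Fin.coe_castSucc]
        exact h
      intro hmem
      exact absurd hmem.1 (not_lt.2 (hz.2.le.trans hle))
  · intro h; exact absurd (Finset.mem_univ i) h

lemma pc_zero_left (N : ℕ) (x : Fin (N + 1) → ℝ) (hx : Monotone x) {z : ℝ}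
    (hz : z < x 0) : pcDensity N x z = 0 := by
  apply Finset.sum_eq_zero
  intro j _
  apply Set.indicator_of_notMem
  intro hmem
  exact absurd hmem.1 (hz.trans_le (hx (Fin.zero_le _))).asymm

lemma pc_zero_right (N : ℕ) (x : Fin (N + 1) → ℝ) (hx : Monotone x) {z : ℝ}
    (hz : x (Fin.last N) < z) : pcDensity N x z = 0 := by
  apply Finset.sum_eq_zero
  intro j _
  apply Set.indicator_of_notMem
  intro hmem
  exact absurd hmem.2 ((hx (Fin.le_last _)).trans_lt hz).asymm

lemma pc_integrable (N : ℕ) (x : Fin (N + 1) → ℝ) : Integrable (pcDensity N x) := by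
  apply integrable_finset_sum
  intro i _
  rw [integrable_indicator_iff measurableSet_Ioo]
  exact integrableOn_const measure_Ioo_lt_top.ne

lemma beta_integrable (N C : ℕ) : Integrable (betaFun N C) := by
  apply integrable_finset_sum
  intro i _
  rw [integrable_indicator_iff measurableSet_Icc]
  exact integrableOn_const measure_Icc_lt_top.ne

lemma beta_bump (N C : ℕ) (hN : 0 < N) {j : ℕ} (hj : j < C + 1) {y : ℝ}
    (hy : y ∈ Set.Icc (2 * (j : ℝ) / Real.sqrt N) ((2 * (j : ℝ) + 1) / Real.sqrt N)) :
    betaFun N C y = (Real.sqrt N)⁻¹ := by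
  have hs : (0:ℝ) < Real.sqrt N := Real.sqrt_pos.2 (by exact_mod_cast hN)
  unfold betaFun
  rw [Finset.sum_eq_single_of_mem j (Finset.mem_range.2 hj)]
  · exact Set.indicator_of_mem hy _
  · intro b _ hbj
    apply Set.indicator_of_notMem
    intro hmem
    rcases lt_or_gt_of_ne hbj with h | h
    · have hb1 : (b:ℝ) + 1 ≤ j := by exact_mod_cast Nat.succ_le_of_lt h
      have h1 : (2*(b:ℝ)+1)/Real.sqrt N < 2*(j:ℝ)/Real.sqrt N := by
        apply div_lt_div_of_pos_right ?_ hs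
        linarith
      have := hmem.2
      have := hy.1
      linarith
    · have hb1 : (j:ℝ) + 1 ≤ b := by exact_mod_cast Nat.succ_le_of_lt h
      have h1 : (2*(j:ℝ)+1)/Real.sqrt N < 2*(b:ℝ)/Real.sqrt N := by
        apply div_lt_div_of_pos_right ?_ hs
        linarith
      have := hmem.1
      have := hy.2
      linarith

lemma beta_gap (N C : ℕ) (hN : 0 < N) {k : ℕ} {y : ℝ}
    (h1 : (2*(k:ℝ)+1)/Real.sqrt N < y) (h2 : y < (2*(k:ℝ)+2)/Real.sqrt N) :
    betaFun N C y = 0 := by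
  have hs : (0:ℝ) < Real.sqrt N := Real.sqrt_pos.2 (by exact_mod_cast hN)
  apply Finset.sum_eq_zero
  intro j _
  apply Set.indicator_of_notMem
  intro hmem
  rcases le_or_gt j k with h | h
  · have hb : (j:ℝ) ≤ k := by exact_mod_cast h
    have h3 : (2*(j:ℝ)+1)/Real.sqrt N ≤ (2*(k:ℝ)+1)/Real.sqrt N := by
      apply div_le_div_of_nonneg_right ?_ hs.le
      linarith
    have := hmem.2
    linarith
  · have hb : (k:ℝ) + 1 ≤ j := by exact_mod_cast Nat.succ_le_of_lt h
    have h3 : (2*(k:ℝ)+2)/Real.sqrt N ≤ 2*(j:ℝ)/Real.sqrt N := by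
      apply div_le_div_of_nonneg_right ?_ hs.le
      linarith
    have := hmem.1
    linarith

lemma exists_interval (N : ℕ) (x : Fin (N + 1) → ℝ) (hx : Monotone x) {y : ℝ}
    (h0 : x 0 < y) (hL : y < x (Fin.last N)) (hP : y ∉ Set.range x) :
    ∃ i : Fin N, x i.castSucc < y ∧ y < x i.succ := by
  classical
  let S : Finset (Fin (N + 1)) := Finset.univ.filter fun j => x j < y
  have hS : S.Nonempty := ⟨0, by simp [S, h0]⟩
  set j0 := S.max' hS with hj0
  have hj0mem : j0 ∈ S := S.max'_mem hS
  have hxj0 : x j0 < y := (Finset.mem_filter.1 hj0mem).2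
  have hj0N : (j0 : ℕ) < N := by
    by_contra h
    have hlast : j0 = Fin.last N := by
      apply Fin.ext
      have := j0.isLt
      simp only [Fin.val_last]
      omega
    rw [hlast] at hxj0
    linarith
  have hcs : (⟨(j0:ℕ), hj0N⟩ : Fin N).castSucc = j0 := by
    apply Fin.ext; simp
  refine ⟨⟨(j0:ℕ), hj0N⟩, ?_, ?_⟩
  · rw [hcs]; exact hxj0
  · by_contra h
    push_neg at h
    have hne : x (⟨(j0:ℕ), hj0N⟩ : Fin N).succ ≠ y := fun he => hP ⟨_, he⟩
    have hlt : x (⟨(j0:ℕ), hj0N⟩ : Fin N).succ < y := lt_of_le_of_ne h hne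
    have hmem : (⟨(j0:ℕ), hj0N⟩ : Fin N).succ ∈ S :=
      Finset.mem_filter.2 ⟨Finset.mem_univ _, hlt⟩
    have hle := S.le_max' _ hmem
    rw [← hj0] at hle
    simp only [Fin.le_def, Fin.val_succ] at hle
    omega

set_option maxHeartbeats 1600000 in
lemma gap_bound (N C : ℕ) (hN : 0 < N) (x : Fin (N + 1) → ℝ) (hx : Monotone x)
    (k : ℕ) (hk : k < C) :
    ∃ E : Set ℝ, MeasurableSet E ∧
      E ⊆ Set.Ico ((2*(k:ℝ) + 1/2)/Real.sqrt N) ((2*(k:ℝ) + 5/2)/Real.sqrt N) ∧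
      1/(4*(N:ℝ)) ≤ ∫ y in E, |pcDensity N x y - betaFun N C y| := by
  classical
  set s := Real.sqrt N with hsdef
  have hNpos : (0:ℝ) < N := by exact_mod_cast hN
  have hs : 0 < s := Real.sqrt_pos.2 hNpos
  have hss : s * s = N := Real.mul_self_sqrt hNpos.le
  set f := fun y => |pcDensity N x y - betaFun N C y| with hf
  have hfint : Integrable f := ((pc_integrable N x).sub (beta_integrable N C)).abs
  set gl := (2*(k:ℝ)+1)/s with hgl
  set gr := (2*(k:ℝ)+2)/s with hgr
  set dl := (2*(k:ℝ) + 1/2)/s with hdl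
  set dr := (2*(k:ℝ) + 5/2)/s with hdr
  have e2 : 1/s = 2*(1/(2*s)) := by field_simp
  have egl : gl = dl + 1/(2*s) := by rw [hgl, hdl]; field_simp; ring
  have egr : gr = gl + 1/s := by rw [hgl, hgr]; field_simp; ring
  have edr : dr = gr + 1/(2*s) := by rw [hgr, hdr]; field_simp; ring
  have ht : (0:ℝ) < 1/(2*s) := by positivity
  have harith : 1/(2*s) * (1/(2*s)) = 1/(4*(N:ℝ)) := by
    rw [← hss]; field_simp; ring
  -- helper for "half bump" sets
  have bumpL : (∀ z ∈ Set.Icc (gl - 1/(2*s)) gl, 1/(2*s) ≤ f z) →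
      ∃ E : Set ℝ, MeasurableSet E ∧ E ⊆ Set.Ico dl dr ∧ 1/(4*(N:ℝ)) ≤ ∫ y in E, f y := by
    intro hbound
    refine ⟨Set.Icc (gl - 1/(2*s)) gl, measurableSet_Icc, ?_, ?_⟩
    · intro z hz
      constructor
      · have : dl ≤ gl - 1/(2*s) := by rw [egl]; ring_nf; exact le_refl _
        linarith [hz.1]
      · have : gl < dr := by rw [edr, egr]; linarith
        linarith [hz.2]
    · have hvol : (volume (Set.Icc (gl - 1/(2*s)) gl)).toReal = 1/(2*s) := by
        rw [Real.volume_Icc]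
        rw [ENNReal.toReal_ofReal (by linarith)]
        ring
      have := setIntegral_ge_of_const_le (μ := volume) (c := 1/(2*s)) measurableSet_Icc
        (by rw [Real.volume_Icc]; exact ENNReal.ofReal_ne_top) hbound hfint.integrableOn
      rw [measureReal_def, hvol, smul_eq_mul] at this
      linarith [this, harith]
  have bumpR : (∀ z ∈ Set.Ico gr (gr + 1/(2*s)), 1/(2*s) ≤ f z) →
      ∃ E : Set ℝ, MeasurableSet E ∧ E ⊆ Set.Ico dl dr ∧ 1/(4*(N:ℝ)) ≤ ∫ y in E, f y := by
    intro hbound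
    refine ⟨Set.Ico gr (gr + 1/(2*s)), measurableSet_Ico, ?_, ?_⟩
    · intro z hz
      constructor
      · have : dl < gr := by rw [egr, egl]; linarith
        linarith [hz.1]
      · have : gr + 1/(2*s) = dr := edr.symm
        linarith [hz.2]
    · have hvol : (volume (Set.Ico gr (gr + 1/(2*s)))).toReal = 1/(2*s) := by
        rw [Real.volume_Ico]
        rw [ENNReal.toReal_ofReal (by linarith)]
        ring
      have := setIntegral_ge_of_const_le (μ := volume) (c := 1/(2*s)) measurableSet_Ico
        (by rw [Real.volume_Ico]; exact ENNReal.ofReal_ne_top) hbound hfint.integrableOn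
      rw [measureReal_def, hvol, smul_eq_mul] at this
      linarith [this, harith]
  -- beta on the two half bumps
  have hdiv : ∀ a b : ℝ, a ≤ b → a/s ≤ b/s := fun a b h =>
    div_le_div_of_nonneg_right h hs.le
  have hglhalf : gl - 1/(2*s) = (2*(k:ℝ)+1/2)/s := by rw [hgl]; field_simp; ring
  have hgrhalf : gr + 1/(2*s) = (2*(k:ℝ)+5/2)/s := by rw [hgr]; field_simp; ring
  have hbetaL : ∀ z ∈ Set.Icc (gl - 1/(2*s)) gl, betaFun N C z = (Real.sqrt N)⁻¹ := by
    intro z hz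
    apply beta_bump N C hN (j := k) (by omega)
    rw [Set.mem_Icc, ← hsdef]
    constructor
    · have h1 : 2*(k:ℝ)/s ≤ (2*(k:ℝ)+1/2)/s := hdiv _ _ (by linarith)
      rw [← hglhalf] at h1
      linarith [hz.1]
    · rw [← hgl]; exact hz.2
  have hbetaR : ∀ z ∈ Set.Ico gr (gr + 1/(2*s)), betaFun N C z = (Real.sqrt N)⁻¹ := by
    intro z hz
    apply beta_bump N C hN (j := k+1) (by omega)
    rw [Set.mem_Icc, ← hsdef]
    push_cast
    constructor
    · have h1 : 2*((k:ℝ)+1)/s = gr := by rw [hgr]; ring_nf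
      linarith [hz.1]
    · have h1 : (2*(k:ℝ)+5/2)/s ≤ (2*((k:ℝ)+1)+1)/s := hdiv _ _ (by linarith)
      rw [← hgrhalf] at h1
      linarith [hz.2]
  have hinv : (Real.sqrt N)⁻¹ = 1/s := by rw [← hsdef, one_div]
  have h1s : 1/s - 1/(2*s) = 1/(2*s) := by field_simp; ring
  -- main dichotomy
  by_cases hcase : ∀ y ∈ Set.Ioo gl gr \ Set.range x, 1/(2*s) ≤ pcDensity N x y
  · -- density is large throughout the gap
    refine ⟨Set.Ioo gl gr \ Set.range x,
      measurableSet_Ioo.diff (Set.finite_range x).measurableSet, ?_, ?_⟩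
    · intro z hz
      obtain ⟨hz1, hz2⟩ := hz.1
      constructor
      · have : dl < gl := by rw [egl]; linarith
        linarith
      · have : gr < dr := by rw [edr]; linarith
        linarith
    · have hnull : volume (Set.range x) = 0 :=
        (Set.finite_range x).countable.measure_zero _
      have hvol : volume (Set.Ioo gl gr \ Set.range x) = ENNReal.ofReal (1/s) := by
        rw [measure_diff_null hnull, Real.volume_Ioo]
        congr 1
        rw [egr]; ring
      have hbound : ∀ z ∈ Set.Ioo gl gr \ Set.range x, 1/(2*s) ≤ f z := by
        intro z hz
        have hb : betaFun N C z = 0 := beta_gap N C hN (k := k)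
          (by rw [← hsdef, ← hgl]; exact hz.1.1) (by rw [← hsdef, ← hgr]; exact hz.1.2)
        rw [hf]
        simp only
        rw [hb, sub_zero, abs_of_nonneg (pc_nonneg N x z)]
        exact hcase z hz
      have := setIntegral_ge_of_const_le (μ := volume) (c := 1/(2*s))
        (measurableSet_Ioo.diff (Set.finite_range x).measurableSet)
        (by rw [hvol]; exact ENNReal.ofReal_ne_top) hbound hfint.integrableOn
      rw [measureReal_def, hvol, ENNReal.toReal_ofReal (by positivity), smul_eq_mul] at this
      have harith2 : 1/(2*s) * (1/s) = 1/(2*(N:ℝ)) := by rw [← hss]; field_simp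
      have hN2 : 1/(4*(N:ℝ)) ≤ 1/(2*(N:ℝ)) := by
        apply div_le_div_of_nonneg_left one_pos.le (by positivity) (by linarith)
      linarith [this]
  · push_neg at hcase
    obtain ⟨y, ⟨hygap, hyP⟩, hylt⟩ := hcase
    rcases lt_or_ge y (x 0) with hy0 | hy0
    · -- y below all particles : density vanishes on left half bump
      apply bumpL
      intro z hz
      have hpc : pcDensity N x z = 0 :=
        pc_zero_left N x hx (lt_of_le_of_lt hz.2 (lt_trans hygap.1 hy0))
      rw [hf]; simp only
      rw [hpc, hbetaL z hz, zero_sub, abs_neg, abs_of_nonneg (by rw [hinv]; positivity)]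
      rw [hinv]
      linarith [h1s, ht]
    · have hx0 : x 0 < y := lt_of_le_of_ne hy0 (fun he => hyP ⟨0, he⟩)
      rcases lt_or_ge (x (Fin.last N)) y with hyL | hyL
      · -- y above all particles : density vanishes on right half bump
        apply bumpR
        intro z hz
        have hpc : pcDensity N x z = 0 :=
          pc_zero_right N x hx (lt_of_lt_of_le (lt_trans hyL hygap.2) hz.1)
        rw [hf]; simp only
        rw [hpc, hbetaR z hz, zero_sub, abs_neg, abs_of_nonneg (by rw [hinv]; positivity)]
        rw [hinv]
        linarith [h1s, ht]
      · have hxL : y < x (Fin.last N) :=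
          lt_of_le_of_ne hyL (fun he => hyP ⟨Fin.last N, he.symm⟩)
        obtain ⟨i, hi1, hi2⟩ := exists_interval N x hx hx0 hxL hyP
        set d := x i.succ - x i.castSucc with hd
        have hdpos : 0 < d := by rw [hd]; linarith
        have hpcy : pcDensity N x y = 1/((N:ℝ)*d) := pc_eval N x hx i ⟨hi1, hi2⟩
        have hlt : 1/((N:ℝ)*d) < 1/(2*s) := by rw [← hpcy]; exact hylt
        have hd2 : 2/s < d := by
          have hNd : (0:ℝ) < (N:ℝ)*d := by positivity
          have h2s : 2*s < (N:ℝ)*d := by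
            by_contra hcon
            push_neg at hcon
            have h1 : 1/(2*s) ≤ 1/((N:ℝ)*d) := one_div_le_one_div_of_le hNd hcon
            linarith
          rw [← hss] at h2s
          have hsd : 2 < s*d := by nlinarith [h2s, hs]
          rw [div_lt_iff₀ hs]
          nlinarith [hsd]
        -- on Ioo (x i.castSucc) (x i.succ), f ≥ 1/(2s) wherever beta = 1/s
        have hcore : ∀ z, z ∈ Set.Ioo (x i.castSucc) (x i.succ) →
            betaFun N C z = (Real.sqrt N)⁻¹ → 1/(2*s) ≤ f z := by
          intro z hz hb
          have hpcz : pcDensity N x z = 1/((N:ℝ)*d) := pc_eval N x hx i hz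
          rw [hf]; simp only
          rw [hpcz, hb, hinv]
          rw [abs_sub_comm]
          have hle : 1/s - 1/((N:ℝ)*d) ≤ |1/s - 1/((N:ℝ)*d)| := le_abs_self _
          have hpos : (0:ℝ) ≤ 1/((N:ℝ)*d) := by positivity
          linarith [hlt, h1s]
        by_cases hcs : x i.castSucc < gl - 1/(2*s)
        · apply bumpL
          intro z hz
          have hzmem : z ∈ Set.Ioo (x i.castSucc) (x i.succ) :=
            ⟨lt_of_lt_of_le hcs hz.1, lt_of_le_of_lt hz.2 (lt_trans hygap.1 hi2)⟩
          exact hcore z hzmem (hbetaL z hz)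
        · push_neg at hcs
          have hxr : gr + 1/(2*s) < x i.succ := by
            have : x i.succ = x i.castSucc + d := by rw [hd]; ring
            rw [this, egr]
            have e3 : 2/s = 2*(1/s) := by ring
            linarith [e2, e3, hd2, hcs]
          apply bumpR
          intro z hz
          have hzmem : z ∈ Set.Ioo (x i.castSucc) (x i.succ) :=
            ⟨lt_of_lt_of_le (lt_trans hi1 hygap.2) hz.1, lt_of_lt_of_le hz.2 hxr.le⟩
          exact hcore z hzmem (hbetaR z hz)

set_option maxHeartbeats 1600000 in
/-- Sharpness building block: the comb `β_N` of `C_N + 1` bumps of height and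
width `N^{-1/2}` cannot be approximated by any `N`-particle piecewise constant
density better than `C_N/(4N)` in `L¹`. -/
theorem stmt_14 (N C : ℕ) (hN : 0 < N) (hC : 0 < C)
    (βN : ℝ → ℝ)
    (hβN : βN = fun y => ∑ k ∈ Finset.range (C + 1),
      Set.indicator (Set.Icc (2 * (k : ℝ) / Real.sqrt N) ((2 * (k : ℝ) + 1) / Real.sqrt N))
        (fun _ => (Real.sqrt N)⁻¹) y) :
    ∀ x : Fin (N + 1) → ℝ, Monotone x →
      (C : ℝ) / (4 * N) ≤
        ∫ y in Set.Icc 0 ((2 * (C : ℝ) + 1) / Real.sqrt N), |pcDensity N x y - βN y| := by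
  intro x hx
  subst hβN
  show (C : ℝ) / (4 * N) ≤
    ∫ y in Set.Icc 0 ((2 * (C : ℝ) + 1) / Real.sqrt N), |pcDensity N x y - betaFun N C y|
  classical
  set s := Real.sqrt N with hsdef
  have hNpos : (0:ℝ) < N := by exact_mod_cast hN
  have hs : 0 < s := Real.sqrt_pos.2 hNpos
  set f := fun y => |pcDensity N x y - betaFun N C y| with hf
  have hfint : Integrable f := ((pc_integrable N x).sub (beta_integrable N C)).abs
  have key : ∀ k : Fin C, ∃ E : Set ℝ, MeasurableSet E ∧
      E ⊆ Set.Ico ((2*((k:ℕ):ℝ) + 1/2)/s) ((2*((k:ℕ):ℝ) + 5/2)/s) ∧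
      1/(4*(N:ℝ)) ≤ ∫ y in E, f y :=
    fun k => gap_bound N C hN x hx k k.isLt
  choose E hE1 hE2 hE3 using key
  have hdisj : Pairwise (Function.onFun Disjoint E) := by
    intro a b hab
    have hIco : Disjoint (Set.Ico ((2*((a:ℕ):ℝ) + 1/2)/s) ((2*((a:ℕ):ℝ) + 5/2)/s))
        (Set.Ico ((2*((b:ℕ):ℝ) + 1/2)/s) ((2*((b:ℕ):ℝ) + 5/2)/s)) := by
      rw [Set.Ico_disjoint_Ico]
      rcases lt_or_gt_of_ne hab with h | h
      · have hba : ((a:ℕ):ℝ) + 1 ≤ ((b:ℕ):ℝ) := by exact_mod_cast Nat.succ_le_of_lt h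
        have : (2*((a:ℕ):ℝ) + 5/2)/s ≤ (2*((b:ℕ):ℝ) + 1/2)/s := by
          apply div_le_div_of_nonneg_right ?_ hs.le
          linarith
        exact le_trans (min_le_left _ _) (le_trans this (le_max_right _ _))
      · have hba : ((b:ℕ):ℝ) + 1 ≤ ((a:ℕ):ℝ) := by exact_mod_cast Nat.succ_le_of_lt h
        have : (2*((b:ℕ):ℝ) + 5/2)/s ≤ (2*((a:ℕ):ℝ) + 1/2)/s := by
          apply div_le_div_of_nonneg_right ?_ hs.le
          linarith
        exact le_trans (min_le_right _ _) (le_trans this (le_max_left _ _))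
    exact hIco.mono (hE2 a) (hE2 b)
  have hunion : ∫ y in ⋃ i, E i, f y = ∑ i : Fin C, ∫ y in E i, f y :=
    integral_iUnion_fintype hE1 hdisj (fun i => hfint.integrableOn)
  have hsub : (⋃ i, E i) ⊆ Set.Icc 0 ((2 * (C : ℝ) + 1) / s) := by
    intro z hz
    obtain ⟨i, hi⟩ := Set.mem_iUnion.1 hz
    have h := hE2 i hi
    constructor
    · have h0 : (0:ℝ) ≤ (2*((i:ℕ):ℝ) + 1/2)/s := by positivity
      linarith [h.1]
    · have hiC : ((i:ℕ):ℝ) + 1 ≤ (C:ℝ) := by exact_mod_cast Nat.succ_le_of_lt i.isLt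
      have : (2*((i:ℕ):ℝ) + 5/2)/s ≤ (2*(C:ℝ) + 1)/s := by
        apply div_le_div_of_nonneg_right ?_ hs.le
        linarith
      linarith [h.2]
  have hmono : ∫ y in ⋃ i, E i, f y ≤ ∫ y in Set.Icc 0 ((2 * (C : ℝ) + 1) / s), f y := by
    apply setIntegral_mono_set hfint.integrableOn
    · exact Filter.Eventually.of_forall fun z => abs_nonneg _
    · exact HasSubset.Subset.eventuallyLE hsub
  calc (C : ℝ) / (4 * N) = ∑ _i : Fin C, 1/(4*(N:ℝ)) := by
        rw [Finset.sum_const, Finset.card_univ, Fintype.card_fin, nsmul_eq_mul]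
        field_simp
    _ ≤ ∑ i : Fin C, ∫ y in E i, f y := Finset.sum_le_sum fun i _ => hE3 i
    _ = ∫ y in ⋃ i, E i, f y := hunion.symm
    _ ≤ ∫ y in Set.Icc 0 ((2 * (C : ℝ) + 1) / s), f y := hmono
end
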